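/- The convexity-correction operator Conv preserves convexity: given a slope sequence $z:\{0,\ldots,N\}\to\mathbb{R}$ that is nondecreasing except possibly at two updated indices $m$ and $m+1$ with $z(m)\le z(m+1)$, the corrected sequence defined by replacing $z(n)$ with $z(m)$ whenever $n<m$ and $z(n)>z(m)$, and with $z(m+1)$ whenever $n>m+1$ and $z(n)<z(m+1)$, is nondecreasing. -/
import Mathlib


/-- The convexity-correction operator `Conv` preserves monotonicity of the slope sequence:
if `z : {0,…,N} → ℝ` is nondecreasing except possibly at the two updated indices `m`, `m+1`,
where `z m ≤ z (m+1)`, then the corrected sequence — replacing `z n` by `z m` whenever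
`n < m` and `z n > z m`, and by `z (m+1)` whenever `n > m+1` and `z n < z (m+1)` — is
nondecreasing on `{0,…,N}`. -/
theorem stmt_11 (N m : ℕ) (z : ℕ → ℝ)
    (hmono : ∀ i j, i ≤ j → j ≤ N → i ≠ m → i ≠ m + 1 → j ≠ m → j ≠ m + 1 → z i ≤ z j)
    (hm : z m ≤ z (m + 1))
    (w : ℕ → ℝ)
    (hw : ∀ n, w n =
      if n < m ∧ z m < z n then z m
      else if m + 1 < n ∧ z n < z (m + 1) then z (m + 1)
      else z n) :
    ∀ i j, i ≤ j → j ≤ N → w i ≤ w j := by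
  have wlt : ∀ n, n < m → w n = min (z n) (z m) := by
    intro n h
    rw [hw n]
    by_cases hz : z m < z n
    · rw [if_pos ⟨h, hz⟩, min_eq_right hz.le]
    · rw [if_neg (fun hc => hz hc.2), if_neg (fun hc => by omega),
        min_eq_left (le_of_not_gt hz)]
  have wm : w m = z m := by
    rw [hw, if_neg (fun hc => by omega), if_neg (fun hc => by omega)]
  have wm1 : w (m + 1) = z (m + 1) := by
    rw [hw, if_neg (fun hc => by omega), if_neg (fun hc => by omega)]
  have wgt : ∀ n, m + 1 < n → w n = max (z n) (z (m + 1)) := by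
    intro n h
    rw [hw n, if_neg (fun hc => by omega)]
    by_cases hz : z n < z (m + 1)
    · rw [if_pos ⟨h, hz⟩, max_eq_right hz.le]
    · rw [if_neg (fun hc => hz hc.2), max_eq_left (le_of_not_gt hz)]
  intro i j hij hjN
  have hi4 : i < m ∨ i = m ∨ i = m + 1 ∨ m + 1 < i := by omega
  have hj4 : j < m ∨ j = m ∨ j = m + 1 ∨ m + 1 < j := by omega
  rcases hi4 with hi | hi | hi | hi <;> rcases hj4 with hj | hj | hj | hj
  · rw [wlt i hi, wlt j hj]
    exact min_le_min (hmono i j hij hjN (by omega) (by omega) (by omega) (by omega)) le_rfl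
  · rw [wlt i hi, hj, wm]; exact min_le_right _ _
  · rw [wlt i hi, hj, wm1]; exact (min_le_right _ _).trans hm
  · rw [wlt i hi, wgt j hj]
    exact (min_le_right _ _).trans (hm.trans (le_max_right _ _))
  · omega
  · rw [hi, hj]
  · rw [hi, hj, wm, wm1]; exact hm
  · rw [hi, wm, wgt j hj]; exact hm.trans (le_max_right _ _)
  · omega
  · omega
  · rw [hi, hj]
  · rw [hi, wm1, wgt j hj]; exact le_max_right _ _
  · omega
  · omega
  · omega
  · rw [wgt i hi, wgt j hj]
    exact max_le_max (hmono i j hij hjN (by omega) (by omega) (by omega) (by omega)) le_rfl
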